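/- For the Lagrange basis of the five/six-point stencil, B(x_{ij},τ)φ₀₀ = τ(1 - 2λ²/3), B(x_{ij},τ)φ₋₁,₋₁ = 0, and B(x_{ij},τ)φ_{±1,0} = B(x_{ij},τ)φ_{0,±1} = τλ²/6, where λ = cτ/h. -/

import Mathlib

open MeasureTheory

/-- The operator B(x,τ)f = (τ/2π) ∫_{|z|<1} f(x+cτz)/√(1-|z|²) dz. -/
noncomputable def Bop (c τ : ℝ) (x : ℝ × ℝ) (f : ℝ × ℝ → ℝ) : ℝ :=
  (τ / (2 * Real.pi)) * ∫ z in {z : ℝ × ℝ | z.1 ^ 2 + z.2 ^ 2 < 1},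
    f (x.1 + c * τ * z.1, x.2 + c * τ * z.2) / Real.sqrt (1 - (z.1 ^ 2 + z.2 ^ 2))

/-- The six Lagrange basis functions of the five/six-point stencil. -/
noncomputable def phi5 (h : ℝ) (q : ℤ × ℤ) (x : ℝ × ℝ) : ℝ :=
  if q = (0, 0) then 1 + x.1 * x.2 / h ^ 2 - x.1 ^ 2 / h ^ 2 - x.2 ^ 2 / h ^ 2
  else if q = (-1, 0) then -x.1 / (2 * h) - x.1 * x.2 / h ^ 2 + x.1 ^ 2 / (2 * h ^ 2)
  else if q = (0, -1) then -x.2 / (2 * h) - x.1 * x.2 / h ^ 2 + x.2 ^ 2 / (2 * h ^ 2)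
  else if q = (-1, -1) then x.1 * x.2 / h ^ 2
  else if q = (1, 0) then x.1 / (2 * h) + x.1 ^ 2 / (2 * h ^ 2)
  else if q = (0, 1) then x.2 / (2 * h) + x.2 ^ 2 / (2 * h ^ 2)
  else 0


section AuxBop

open Real Set intervalIntegral
noncomputable def sB (r : ℝ) : ℝ := Real.sqrt (1 - r ^ 2)


lemma sB_hasDeriv {x : ℝ} (hx : x ∈ Ioo (0:ℝ) 1) :
    HasDerivAt sB (-x / sB x) x := by
  have h1 : (1:ℝ) - x ^ 2 ≠ 0 := by nlinarith [hx.1, hx.2]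
  have h2 : HasDerivAt (fun y : ℝ => 1 - y ^ 2) (-(2 * x)) x := by
    simpa using ((hasDerivAt_pow 2 x).const_sub 1)
  have := (Real.hasDerivAt_sqrt h1).comp x h2
  refine this.congr_deriv ?_
  symm
  simp only [sB]
  field_simp

lemma sB_pos {x : ℝ} (hx : x ∈ Ioo (0:ℝ) 1) : 0 < sB x := by
  apply Real.sqrt_pos.2; nlinarith [hx.1, hx.2]

lemma cont_sB : Continuous sB := by
  exact (continuous_const.sub (continuous_pow 2)).sqrt

-- integrability of 1/sB on Ioc 0 1
lemma int_one_div_sB : IntegrableOn (fun r : ℝ => 1 / sB r) (Ioc 0 1) := by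
  apply integrableOn_deriv_of_nonneg (g := Real.arcsin)
  · exact Real.continuous_arcsin.continuousOn
  · intro x hx
    simpa [sB] using Real.hasDerivAt_arcsin (by intro h; rw [h] at hx; exact absurd hx.1 (by norm_num)) (ne_of_lt hx.2)
  · intro x hx
    have := Real.sqrt_nonneg (1 - x ^ 2)
    simp only [sB]
    positivity

lemma int_mul_one_div_sB (k : ℕ) : IntegrableOn (fun r : ℝ => r ^ k / sB r) (Ioc 0 1) := by
  have hm : AEStronglyMeasurable (fun r : ℝ => r ^ k / sB r) (volume.restrict (Ioc 0 1)) := by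
    apply Measurable.aestronglyMeasurable
    exact (measurable_id.pow_const k).div cont_sB.measurable
  apply Integrable.mono int_one_div_sB hm
  rw [ae_restrict_iff' measurableSet_Ioc]
  filter_upwards with x hx
  rcases eq_or_lt_of_le hx.2 with h | h
  · subst h; norm_num [sB]
  · have h1 : 0 < sB x := sB_pos ⟨hx.1, h⟩
    have h2 : x ^ k ≤ 1 := pow_le_one₀ (le_of_lt hx.1) hx.2
    rw [Real.norm_eq_abs, Real.norm_eq_abs, abs_div, abs_div, abs_of_pos h1, abs_one]
    gcongr
    calc |x ^ k| = x ^ k := abs_of_pos (pow_pos hx.1 k)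
      _ ≤ 1 := h2



lemma ii_mul (k : ℕ) : IntervalIntegrable (fun r : ℝ => r ^ k / sB r) volume 0 1 := by
  rw [intervalIntegrable_iff_integrableOn_Ioc_of_le (by norm_num)]
  exact int_mul_one_div_sB k

lemma r_int1 : ∫ r in (0:ℝ)..1, r / sB r = 1 := by
  have h : ∫ r in (0:ℝ)..1, r ^ 1 / sB r = 1 := by
    rw [integral_eq_sub_of_hasDerivAt_of_le (by norm_num)
      (f := fun r => -sB r) (cont_sB.neg.continuousOn) ?_ (ii_mul 1)]
    · norm_num [sB]
    · intro x hx
      have h1 := (sB_hasDeriv hx).neg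
      refine h1.congr_deriv ?_
      symm
      have := sB_pos hx
      field_simp
  simpa using h

lemma r_int3 : ∫ r in (0:ℝ)..1, r ^ 3 / sB r = 2 / 3 := by
  rw [integral_eq_sub_of_hasDerivAt_of_le (by norm_num)
    (f := fun r => -((2 + r ^ 2) * sB r) / 3) ?_ ?_ (ii_mul 3)]
  · norm_num [sB]
  · exact (((continuous_const.add (continuous_pow 2)).mul cont_sB).neg.div_const 3).continuousOn
  · intro x hx
    have hs := sB_pos hx
    have h1 : HasDerivAt (fun r : ℝ => 2 + r ^ 2) (2 * x) x := by
      simpa using (hasDerivAt_pow 2 x).const_add 2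
    have h2 := ((h1.mul (sB_hasDeriv hx)).neg.div_const 3)
    refine h2.congr_deriv ?_
    symm
    have hsq : sB x ^ 2 = 1 - x ^ 2 := Real.sq_sqrt (by nlinarith [hx.1, hx.2])
    field_simp
    linear_combination (2 * x) * hsq

lemma theta_int (a b c d e f r : ℝ) :
    ∫ θ in (-π)..π, (a + b * (r * Real.cos θ) + c * (r * Real.sin θ)
      + d * ((r * Real.cos θ) * (r * Real.sin θ)) + e * (r * Real.cos θ) ^ 2
      + f * (r * Real.sin θ) ^ 2)
    = 2 * π * a + π * r ^ 2 * e + π * r ^ 2 * f := by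
  have hcont : Continuous fun θ : ℝ => (a + b * (r * Real.cos θ) + c * (r * Real.sin θ)
      + d * ((r * Real.cos θ) * (r * Real.sin θ)) + e * (r * Real.cos θ) ^ 2
      + f * (r * Real.sin θ) ^ 2) := by continuity
  rw [integral_eq_sub_of_hasDerivAt (f := fun θ => a * θ + b * (r * Real.sin θ)
      - c * (r * Real.cos θ) + d * (r ^ 2 * (Real.sin θ ^ 2 / 2))
      + e * (r ^ 2 * ((θ + Real.sin θ * Real.cos θ) / 2))
      + f * (r ^ 2 * ((θ - Real.sin θ * Real.cos θ) / 2))) ?_ (hcont.intervalIntegrable _ _)]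
  · simp only [Real.sin_pi, Real.cos_pi, Real.sin_neg, Real.cos_neg]
    ring
  · intro x _
    have hsc : HasDerivAt (fun θ => Real.sin θ * Real.cos θ)
        (Real.cos x * Real.cos x + Real.sin x * (-Real.sin x)) x :=
      (Real.hasDerivAt_sin x).mul (Real.hasDerivAt_cos x)
    have hs2 : HasDerivAt (fun θ => Real.sin θ ^ 2) (2 * Real.sin x * Real.cos x) x := by
      have := ((Real.hasDerivAt_sin x).pow 2)
      convert this using 1 <;> first | rfl | ring
    have hA : HasDerivAt (fun θ => a * θ + b * (r * Real.sin θ)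
        - c * (r * Real.cos θ) + d * (r ^ 2 * (Real.sin θ ^ 2 / 2))
        + e * (r ^ 2 * ((θ + Real.sin θ * Real.cos θ) / 2))
        + f * (r ^ 2 * ((θ - Real.sin θ * Real.cos θ) / 2)))
        (a * 1 + b * (r * Real.cos x) - c * (r * (-Real.sin x))
          + d * (r ^ 2 * ((2 * Real.sin x * Real.cos x) / 2))
          + e * (r ^ 2 * ((1 + (Real.cos x * Real.cos x + Real.sin x * (-Real.sin x))) / 2))
          + f * (r ^ 2 * ((1 - (Real.cos x * Real.cos x + Real.sin x * (-Real.sin x))) / 2))) x := by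
      exact (((((hasDerivAt_id x).const_mul a).add
        (((Real.hasDerivAt_sin x).const_mul r).const_mul b)).sub
        (((Real.hasDerivAt_cos x).const_mul r).const_mul c)).add
        (((hs2.div_const 2).const_mul (r ^ 2)).const_mul d)).add
        ((((((hasDerivAt_id x).add hsc).div_const 2).const_mul (r ^ 2)).const_mul e)) |>.add
        ((((((hasDerivAt_id x).sub hsc).div_const 2).const_mul (r ^ 2)).const_mul f))
    refine hA.congr_deriv ?_
    symm
    have pyth := Real.sin_sq_add_cos_sq x
    linear_combination (e * r ^ 2 / 2 + f * r ^ 2 / 2) * pyth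



lemma key (a b c d e f : ℝ) :
    ∫ z in {z : ℝ × ℝ | z.1 ^ 2 + z.2 ^ 2 < 1},
      (a + b * z.1 + c * z.2 + d * (z.1 * z.2) + e * z.1 ^ 2 + f * z.2 ^ 2)
        / Real.sqrt (1 - (z.1 ^ 2 + z.2 ^ 2))
    = 2 * π * a + 2 * π / 3 * (e + f) := by
  set D : Set (ℝ × ℝ) := {z : ℝ × ℝ | z.1 ^ 2 + z.2 ^ 2 < 1} with hDdef
  set F : ℝ × ℝ → ℝ := fun z =>
    (a + b * z.1 + c * z.2 + d * (z.1 * z.2) + e * z.1 ^ 2 + f * z.2 ^ 2)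
      / Real.sqrt (1 - (z.1 ^ 2 + z.2 ^ 2)) with hFdef
  set G : ℝ × ℝ → ℝ := fun p =>
    p.1 * ((a + b * (p.1 * Real.cos p.2) + c * (p.1 * Real.sin p.2)
      + d * ((p.1 * Real.cos p.2) * (p.1 * Real.sin p.2)) + e * (p.1 * Real.cos p.2) ^ 2
      + f * (p.1 * Real.sin p.2) ^ 2) / sB p.1) with hGdef
  have hD : MeasurableSet D :=
    measurableSet_lt (by fun_prop) measurable_const
  have hsum : ∀ p : ℝ × ℝ, (p.1 * Real.cos p.2) ^ 2 + (p.1 * Real.sin p.2) ^ 2 = p.1 ^ 2 := by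
    intro p
    have := Real.sin_sq_add_cos_sq p.2
    nlinarith [this]
  rw [← MeasureTheory.integral_indicator hD, ← integral_comp_polarCoord_symm]
  have htgt : polarCoord.target = Ioi (0:ℝ) ×ˢ Ioo (-π) π := rfl
  have hsub : Ioo (0:ℝ) 1 ×ˢ Ioo (-π) π ⊆ Ioi (0:ℝ) ×ˢ Ioo (-π) π :=
    Set.prod_mono Ioo_subset_Ioi_self subset_rfl
  have hmeasT : MeasurableSet (Ioi (0:ℝ) ×ˢ Ioo (-π) π) :=
    measurableSet_Ioi.prod measurableSet_Ioo
  have hmeasS : MeasurableSet (Ioo (0:ℝ) 1 ×ˢ Ioo (-π) π) :=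
    measurableSet_Ioo.prod measurableSet_Ioo
  rw [htgt, setIntegral_eq_of_subset_of_forall_diff_eq_zero hmeasT hsub ?hzero]
  case hzero =>
    rintro ⟨r, θ⟩ ⟨⟨hr, hθ⟩, hns⟩
    have hr1 : (1:ℝ) ≤ r := by
      by_contra hlt
      exact hns ⟨⟨hr, lt_of_not_ge hlt⟩, hθ⟩
    have : polarCoord.symm (r, θ) ∉ D := by
      simp only [hDdef, mem_setOf_eq, not_lt]
      show 1 ≤ (r * Real.cos θ) ^ 2 + (r * Real.sin θ) ^ 2
      rw [hsum (r, θ)]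
      nlinarith [hr1]
    rw [Set.indicator_of_notMem this, smul_zero]
  have heq : EqOn (fun p : ℝ × ℝ => p.1 • D.indicator F (polarCoord.symm p)) G
      (Ioo (0:ℝ) 1 ×ˢ Ioo (-π) π) := by
    rintro ⟨r, θ⟩ ⟨hr, hθ⟩
    have hmem : polarCoord.symm (r, θ) ∈ D := by
      simp only [hDdef, mem_setOf_eq]
      show (r * Real.cos θ) ^ 2 + (r * Real.sin θ) ^ 2 < 1
      rw [hsum (r, θ)]
      nlinarith [hr.1, hr.2]
    simp only
    rw [Set.indicator_of_mem hmem, smul_eq_mul]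
    show r * F (r * Real.cos θ, r * Real.sin θ) = G (r, θ)
    simp only [hFdef, hGdef, sB]
    rw [hsum (r, θ)]
  rw [setIntegral_congr_fun hmeasS heq]
  -- integrability of G on the product
  set M : ℝ := |a| + |b| + |c| + |d| + |e| + |f| with hM
  have hGint : IntegrableOn G (Ioo (0:ℝ) 1 ×ˢ Ioo (-π) π) := by
    have hGmeas : Measurable G := by
      apply Measurable.mul measurable_fst
      apply Measurable.div _ (cont_sB.measurable.comp measurable_fst)
      fun_prop
    have hu : IntegrableOn (fun r : ℝ => M / sB r) (Ioo (0:ℝ) 1) := by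
      have := (int_mul_one_div_sB 0).const_mul M
      apply IntegrableOn.mono_set _ Ioo_subset_Ioc_self
      simpa [div_eq_mul_inv, IntegrableOn] using this
    have hv : IntegrableOn (fun _ : ℝ => (1:ℝ)) (Ioo (-π) π) :=
      integrableOn_const measure_Ioo_lt_top.ne
    have hprod : IntegrableOn (fun p : ℝ × ℝ => (M / sB p.1) * 1)
        (Ioo (0:ℝ) 1 ×ˢ Ioo (-π) π) := by
      rw [IntegrableOn, Measure.volume_eq_prod, ← Measure.prod_restrict]
      exact Integrable.mul_prod hu hv
    apply Integrable.mono hprod hGmeas.aestronglyMeasurable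
    rw [ae_restrict_iff' hmeasS]
    filter_upwards with p hp
    obtain ⟨hr, hθ⟩ := hp
    have hs : 0 < sB p.1 := sB_pos hr
    have hu1 : |p.1 * Real.cos p.2| ≤ 1 := by
      rw [abs_mul]
      exact mul_le_one₀ (by rw [abs_of_pos hr.1]; exact hr.2.le) (abs_nonneg _)
        (Real.abs_cos_le_one _)
    have hv1 : |p.1 * Real.sin p.2| ≤ 1 := by
      rw [abs_mul]
      exact mul_le_one₀ (by rw [abs_of_pos hr.1]; exact hr.2.le) (abs_nonneg _)
        (Real.abs_sin_le_one _)
    have hpoly : |a + b * (p.1 * Real.cos p.2) + c * (p.1 * Real.sin p.2)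
        + d * ((p.1 * Real.cos p.2) * (p.1 * Real.sin p.2)) + e * (p.1 * Real.cos p.2) ^ 2
        + f * (p.1 * Real.sin p.2) ^ 2| ≤ M := by
      set u := p.1 * Real.cos p.2
      set v := p.1 * Real.sin p.2
      have h2 : |b * u| ≤ |b| := by
        rw [abs_mul]; exact mul_le_of_le_one_right (abs_nonneg _) hu1
      have h3 : |c * v| ≤ |c| := by
        rw [abs_mul]; exact mul_le_of_le_one_right (abs_nonneg _) hv1
      have h4 : |d * (u * v)| ≤ |d| := by
        rw [abs_mul]
        refine mul_le_of_le_one_right (abs_nonneg _) ?_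
        rw [abs_mul]
        exact mul_le_one₀ hu1 (abs_nonneg _) hv1
      have h5 : |e * u ^ 2| ≤ |e| := by
        rw [abs_mul]
        refine mul_le_of_le_one_right (abs_nonneg _) ?_
        rw [abs_pow]; exact pow_le_one₀ (abs_nonneg _) hu1
      have h6 : |f * v ^ 2| ≤ |f| := by
        rw [abs_mul]
        refine mul_le_of_le_one_right (abs_nonneg _) ?_
        rw [abs_pow]; exact pow_le_one₀ (abs_nonneg _) hv1
      calc |a + b * u + c * v + d * (u * v) + e * u ^ 2 + f * v ^ 2|
          ≤ |a + b * u + c * v + d * (u * v) + e * u ^ 2| + |f * v ^ 2| := abs_add_le _ _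
        _ ≤ |a + b * u + c * v + d * (u * v)| + |e * u ^ 2| + |f * v ^ 2| := by
              gcongr; exact abs_add_le _ _
        _ ≤ |a + b * u + c * v| + |d * (u * v)| + |e * u ^ 2| + |f * v ^ 2| := by
              gcongr; exact abs_add_le _ _
        _ ≤ |a + b * u| + |c * v| + |d * (u * v)| + |e * u ^ 2| + |f * v ^ 2| := by
              gcongr; exact abs_add_le _ _
        _ ≤ |a| + |b * u| + |c * v| + |d * (u * v)| + |e * u ^ 2| + |f * v ^ 2| := by
              gcongr; exact abs_add_le _ _
        _ ≤ M := by rw [hM]; linarith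
    have hMnn : 0 ≤ M := by positivity
    rw [Real.norm_eq_abs, Real.norm_eq_abs, hGdef]
    simp only
    rw [abs_mul, abs_div, mul_one, abs_div, abs_of_pos hs, abs_of_pos hr.1, abs_of_nonneg hMnn]
    rw [div_eq_mul_one_div M (sB p.1)]
    refine le_trans ?_ (le_of_eq (one_mul _))
    gcongr
    · exact hr.2.le
    · rw [div_eq_mul_one_div]
      exact mul_le_mul_of_nonneg_right hpoly (by positivity)
  rw [Measure.volume_eq_prod] at hGint
  rw [Measure.volume_eq_prod, setIntegral_prod G hGint]
  have hinner : (fun r : ℝ => ∫ θ in Ioo (-π) π, G (r, θ))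
      = fun r : ℝ => (2 * π * a) * (r / sB r) + (π * e + π * f) * (r ^ 3 / sB r) := by
    funext r
    have hGe : ∀ θ : ℝ, G (r, θ) = (r / sB r) * (a + b * (r * Real.cos θ) + c * (r * Real.sin θ)
        + d * ((r * Real.cos θ) * (r * Real.sin θ)) + e * (r * Real.cos θ) ^ 2
        + f * (r * Real.sin θ) ^ 2) := by
      intro θ
      simp only [hGdef]
      ring
    simp_rw [hGe]
    rw [MeasureTheory.integral_const_mul, ← MeasureTheory.integral_Ioc_eq_integral_Ioo,
      ← intervalIntegral.integral_of_le (by linarith [Real.pi_pos] : -π ≤ π),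
      theta_int a b c d e f r]
    ring
  rw [hinner]
  have h1 : IntegrableOn (fun r : ℝ => r / sB r) (Ioo (0:ℝ) 1) := by
    have := (int_mul_one_div_sB 1).mono_set Ioo_subset_Ioc_self
    simpa using this
  have h3 : IntegrableOn (fun r : ℝ => r ^ 3 / sB r) (Ioo (0:ℝ) 1) :=
    (int_mul_one_div_sB 3).mono_set Ioo_subset_Ioc_self
  rw [MeasureTheory.integral_add (h1.const_mul _) (h3.const_mul _),
    MeasureTheory.integral_const_mul, MeasureTheory.integral_const_mul,
    ← MeasureTheory.integral_Ioc_eq_integral_Ioo, ← MeasureTheory.integral_Ioc_eq_integral_Ioo,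
    ← intervalIntegral.integral_of_le (by norm_num : (0:ℝ) ≤ 1),
    ← intervalIntegral.integral_of_le (by norm_num : (0:ℝ) ≤ 1),
    r_int1, r_int3]
  ring

lemma Bop_eval (c τ h : ℝ) (q : ℤ × ℤ) (a b' c' d e f : ℝ)
    (hφ : ∀ z : ℝ × ℝ, phi5 h q ((0:ℝ) + c * τ * z.1, (0:ℝ) + c * τ * z.2)
      = a + b' * z.1 + c' * z.2 + d * (z.1 * z.2) + e * z.1 ^ 2 + f * z.2 ^ 2) :
    Bop c τ (0, 0) (phi5 h q)
      = (τ / (2 * π)) * (2 * π * a + 2 * π / 3 * (e + f)) := by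
  rw [Bop, ← key a b' c' d e f]
  congr 1
  apply setIntegral_congr_fun (measurableSet_lt (by fun_prop) measurable_const)
  intro z _
  simp only
  rw [hφ z]


/-- Values of B on the Lagrange basis of the five/six-point stencil, λ = cτ/h. -/
theorem Bop_phi5 (c τ h : ℝ) (hc : 0 < c) (hτ : 0 < τ) (hh : 0 < h) :
    Bop c τ (0, 0) (phi5 h (0, 0)) = τ * (1 - 2 * (c * τ / h) ^ 2 / 3) ∧
    Bop c τ (0, 0) (phi5 h (-1, -1)) = 0 ∧
    Bop c τ (0, 0) (phi5 h (1, 0)) = τ * (c * τ / h) ^ 2 / 6 ∧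
    Bop c τ (0, 0) (phi5 h (-1, 0)) = τ * (c * τ / h) ^ 2 / 6 ∧
    Bop c τ (0, 0) (phi5 h (0, 1)) = τ * (c * τ / h) ^ 2 / 6 ∧
    Bop c τ (0, 0) (phi5 h (0, -1)) = τ * (c * τ / h) ^ 2 / 6 := by
  have hπ : (π : ℝ) ≠ 0 := Real.pi_ne_zero
  have hh' : (h : ℝ) ≠ 0 := ne_of_gt hh
  refine ⟨?_, ?_, ?_, ?_, ?_, ?_⟩
  · rw [Bop_eval c τ h (0,0) 1 0 0 (c^2*τ^2/h^2) (-(c^2*τ^2/h^2)) (-(c^2*τ^2/h^2))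
      (fun z => by simp only [phi5, reduceIte, Prod.mk.injEq]; norm_num; ring)]
    field_simp
    ring
  · rw [Bop_eval c τ h (-1,-1) 0 0 0 (c^2*τ^2/h^2) 0 0
      (fun z => by simp only [phi5, reduceIte, Prod.mk.injEq]; norm_num; ring)]
    ring
  · rw [Bop_eval c τ h (1,0) 0 (c*τ/(2*h)) 0 0 (c^2*τ^2/(2*h^2)) 0
      (fun z => by simp only [phi5, reduceIte, Prod.mk.injEq]; norm_num; ring)]
    field_simp
    ring
  · rw [Bop_eval c τ h (-1,0) 0 (-(c*τ)/(2*h)) 0 (-(c^2*τ^2/h^2)) (c^2*τ^2/(2*h^2)) 0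
      (fun z => by simp only [phi5, reduceIte, Prod.mk.injEq]; norm_num; ring)]
    field_simp
    ring
  · rw [Bop_eval c τ h (0,1) 0 0 (c*τ/(2*h)) 0 0 (c^2*τ^2/(2*h^2))
      (fun z => by simp only [phi5, reduceIte, Prod.mk.injEq]; norm_num; ring)]
    field_simp
    ring
  · rw [Bop_eval c τ h (0,-1) 0 0 (-(c*τ)/(2*h)) (-(c^2*τ^2/h^2)) 0 (c^2*τ^2/(2*h^2))
      (fun z => by simp only [phi5, reduceIte, Prod.mk.injEq]; norm_num; ring)]
    field_simp
    ring

end AuxBop
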